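/- Let K be a field of characteristic zero and n ≥ 1 an integer. Let M be the free K-vector space with basis {f_k : k ≥ 0} ∪ {e_k : k ≥ 0}, b : M → M the K-linear map with b(f_k) = 0, b(e_k) = f_{k−n} for k ≥ n and b(e_k) = 0 for k < n, and B : M → M the K-linear map with B(f_k) = 0 and B(e_k) = (k+1) f_{k+1}. For 0 ≤ k ≤ n−1 set c_{k,0} = 1 and c_{k,l} = ∏_{j=0}^{l−1} (k + 1 + j(n+1)) for l ≥ 1, and define the formal power series s_k = Σ_{l≥0} (−1)^l c_{k,l} e_{k+(n+1)l} u^l ∈ M[[u]]. Then (b + uB)(s_k) = 0 in M[[u]], the constant term of s_k is e_k, and s_k is homogeneous of weight (2k+1−n)/(n+1) with respect to the weights wt(f_m) = 2m/(n+1), wt(e_m) = (2m+1−n)/(n+1), wt(u) = −2 (i.e., each coefficient of u^l in s_k is homogeneous in M of weight (2k+1−n)/(n+1) + 2l). -/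

import Mathlib

set_option maxHeartbeats 8000000
set_option synthInstance.maxHeartbeats 8000000

noncomputable section

open Finsupp

/-- The reduced Hochschild chain complex of `A_n` as a free vector space:
`Sum.inl k` indexes the even basis vector `f_k = 1|ε^k`,
`Sum.inr k` indexes the odd basis vector `e_k = ε|ε^k`. -/
abbrev MM (K : Type*) [Field K] := (ℕ ⊕ ℕ) →₀ K

/-- The even basis vectors `f_k`. -/
def fv (K : Type*) [Field K] (k : ℕ) : MM K := Finsupp.single (Sum.inl k) 1

/-- The odd basis vectors `e_k`. -/
def ev (K : Type*) [Field K] (k : ℕ) : MM K := Finsupp.single (Sum.inr k) 1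

/-- The Hochschild differential: `b f_k = 0`, `b e_k = f_{k-n}` if `k ≥ n`, else `0`. -/
def bmap (K : Type*) [Field K] (n : ℕ) : MM K →ₗ[K] MM K :=
  Finsupp.linearCombination K
    (Sum.elim (fun _ => (0 : MM K)) (fun k => if n ≤ k then fv K (k - n) else 0))

/-- The Connes cyclic operator: `B f_k = 0`, `B e_k = (k+1) f_{k+1}`. -/
def Bmap (K : Type*) [Field K] : MM K →ₗ[K] MM K :=
  Finsupp.linearCombination K
    (Sum.elim (fun _ => (0 : MM K)) (fun k => ((k : K) + 1) • fv K (k + 1)))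

/-- The coefficients `c_{k,l} = ∏_{j=0}^{l-1} (k + 1 + j(n+1))`, with `c_{k,0} = 1`. -/
def cc (n k l : ℕ) : ℕ := ∏ j ∈ Finset.range l, (k + 1 + j * (n + 1))

/-- The element `s_k = Σ_{l≥0} (−1)^l c_{k,l} e_{k+(n+1)l} u^l ∈ M[[u]]`,
where an element of `M[[u]]` is recorded by its sequence of coefficients. -/
def sElt (K : Type*) [Field K] (n k : ℕ) : ℕ → MM K :=
  fun l => ((-1 : K) ^ l * (cc n k l : K)) • ev K (k + (n + 1) * l)

/-- The operator `b + uB` on `M[[u]]`, acting on sequences of coefficients. -/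
def Dop (K : Type*) [Field K] (n : ℕ) : (ℕ → MM K) → (ℕ → MM K) :=
  fun x l => bmap K n (x l) + (if l = 0 then 0 else Bmap K (x (l - 1)))

/-- The weights of the basis vectors: `wt f_m = 2m/(n+1)`, `wt e_m = (2m+1−n)/(n+1)`. -/
def wtB (n : ℕ) : (ℕ ⊕ ℕ) → ℚ :=
  Sum.elim (fun m => 2 * m / (n + 1)) (fun m => (2 * m + 1 - n) / (n + 1))

/-- An element of `M` is homogeneous of weight `w` if it is supported on
basis vectors of weight `w`. -/
def IsHomog (K : Type*) [Field K] (n : ℕ) (x : MM K) (w : ℚ) : Prop :=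
  ∀ i, x i ≠ 0 → wtB n i = w

lemma bmap_ev (K : Type*) [Field K] (n m : ℕ) :
    bmap K n (ev K m) = if n ≤ m then fv K (m - n) else 0 := by
  simp [bmap, ev, Finsupp.linearCombination_single]

lemma Bmap_ev (K : Type*) [Field K] (m : ℕ) :
    Bmap K (ev K m) = ((m : K) + 1) • fv K (m + 1) := by
  simp [Bmap, ev, Finsupp.linearCombination_single]

theorem stmt2 (K : Type*) [Field K] [CharZero K] (n : ℕ) (hn : 1 ≤ n)
    (k : ℕ) (hk : k ≤ n - 1) :
    -- (b + uB)(s_k) = 0 in M[[u]]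
    Dop K n (sElt K n k) = 0 ∧
    -- the constant term of s_k is e_k
    sElt K n k 0 = ev K k ∧
    -- s_k is homogeneous of weight (2k+1−n)/(n+1) with wt(u) = −2: the coefficient
    -- of u^l is homogeneous in M of weight (2k+1−n)/(n+1) + 2l
    (∀ l : ℕ, IsHomog K n (sElt K n k l) ((2 * k + 1 - n) / (n + 1) + 2 * l)) := by
  have hkn : k < n := by omega
  refine ⟨?_, ?_, ?_⟩
  · funext l
    cases l with
    | zero =>
      have hnk : ¬ n ≤ k := by omega
      simp [Dop, sElt, bmap_ev, hnk]
    | succ m =>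
      have h1 : n ≤ k + (n + 1) * (m + 1) := by nlinarith
      have h2 : k + (n + 1) * (m + 1) - n = k + (n + 1) * m + 1 := by ring_nf; omega
      simp only [Dop, if_neg (Nat.succ_ne_zero m), Nat.add_sub_cancel, sElt,
        map_smul, bmap_ev, if_pos h1, Bmap_ev, Pi.zero_apply, h2]
      rw [show cc n k (m + 1) = cc n k m * (k + 1 + m * (n + 1)) from Finset.prod_range_succ _ _]
      rw [smul_smul, ← add_smul]
      convert zero_smul K (fv K (k + (n + 1) * m + 1))
      push_cast
      ring
  · simp [sElt, cc]
  · intro l i hi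
    simp only [sElt, Finsupp.smul_apply, ev, Finsupp.single_apply, smul_eq_mul] at hi
    have : Sum.inr (k + (n + 1) * l) = i := by
      by_contra h
      simp [h] at hi
    subst this
    simp only [wtB, Sum.elim_inr]
    have hn1 : ((n : ℚ) + 1) ≠ 0 := by positivity
    field_simp
    push_cast
    ring
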